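/- Let (ℓ_n)_{n≥5} be integers with ℓ₅ < 0, ℓ₆ < 3ℓ₅, and ℓ_{n+2} = (n+1)(ℓ_{n+1} − ℓ_n). Fix L > 0 (playing the role of log|λ|) and set φ(τ) = sup_{n≥5}(ℓ_n·L + nτ) for τ ∈ ℝ. Then for every n ≥ 5 and every τ with (ℓ_n − ℓ_{n+1})L ≤ τ ≤ (ℓ_{n+1} − ℓ_{n+2})L, the supremum defining φ(τ) is attained at the index n+1, i.e. φ(τ) = ℓ_{n+1}L + (n+1)τ; moreover φ maps the point τ_n := (ℓ_n − ℓ_{n+1})L to τ_{n+1} and maps (τ_n, τ_{n+1}) onto (τ_{n+1}, τ_{n+2}). -/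

import Mathlib

/-- The piecewise affine function φ(τ) = sup_{m≥5}(ℓ_m·L + mτ), representing
log sup_{|z|≤e^τ} |f(z)| for f(z) = Σ_{m≥5} λ^{ℓ_m} z^m with L = log|λ|. -/
noncomputable def phi9 (l : ℕ → ℤ) (L : ℝ) (τ : ℝ) : ℝ :=
  ⨆ m : ℕ, (((l (m + 5) : ℤ) : ℝ) * L + ((m : ℝ) + 5) * τ)

/-- The critical values τ_n = (ℓ_n − ℓ_{n+1})·L. -/
noncomputable def tau9 (l : ℕ → ℤ) (L : ℝ) (n : ℕ) : ℝ :=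
  ((l n - l (n + 1) : ℤ) : ℝ) * L


private lemma chain_up (f : ℕ → ℝ) :
    ∀ a b : ℕ, a ≤ b → (∀ k, a ≤ k → k < b → f k ≤ f (k + 1)) → f a ≤ f b := by
  intro a b hab
  induction b, hab using Nat.le_induction with
  | base => intro _; exact le_refl _
  | succ b hb ih =>
    intro h
    exact le_trans (ih fun k hk hk' => h k hk (Nat.lt_succ_of_lt hk'))
      (h b hb (Nat.lt_succ_self b))

private lemma chain_down (f : ℕ → ℝ) :
    ∀ a b : ℕ, a ≤ b → (∀ k, a ≤ k → k < b → f (k + 1) ≤ f k) → f b ≤ f a := by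
  intro a b hab
  induction b, hab using Nat.le_induction with
  | base => intro _; exact le_refl _
  | succ b hb ih =>
    intro h
    exact le_trans (h b hb (Nat.lt_succ_self b))
      (ih fun k hk hk' => h k hk (Nat.lt_succ_of_lt hk'))

private lemma dlem (l : ℕ → ℤ) (h5 : l 5 < 0) (h6 : l 6 < 3 * l 5)
    (hrec : ∀ n : ℕ, 5 ≤ n → l (n + 2) = ((n : ℤ) + 1) * (l (n + 1) - l n)) :
    ∀ n, 5 ≤ n → l (n + 2) - l (n + 1) < l (n + 1) - l n ∧ l (n + 1) - l n < 0 := by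
  intro n hn
  induction n, hn using Nat.le_induction with
  | base =>
    have h7 := hrec 5 (le_refl 5)
    norm_num at h7 ⊢
    constructor <;> nlinarith
  | succ n hn ih =>
    obtain ⟨ha, hb⟩ := ih
    have h1 := hrec n hn
    have h2 := hrec (n + 1) (by omega)
    have hn' : (5 : ℤ) ≤ (n : ℤ) := by exact_mod_cast hn
    have hd1 : l (n + 2) - l (n + 1) < 0 := lt_trans ha hb
    refine ⟨?_, hd1⟩
    have hp : ((n : ℤ) + 1) * (l (n + 2) - l (n + 1)) < ((n : ℤ) + 1) * (l (n + 1) - l n) :=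
      mul_lt_mul_of_pos_left ha (by linarith)
    push_cast at h2
    nlinarith

private lemma dmono (l : ℕ → ℤ) (h5 : l 5 < 0) (h6 : l 6 < 3 * l 5)
    (hrec : ∀ n : ℕ, 5 ≤ n → l (n + 2) = ((n : ℤ) + 1) * (l (n + 1) - l n)) :
    ∀ a b : ℕ, 5 ≤ a → a ≤ b → l (b + 1) - l b ≤ l (a + 1) - l a := by
  intro a b ha hab
  induction b, hab using Nat.le_induction with
  | base => exact le_refl _
  | succ b hb ih =>
    exact le_trans (le_of_lt (dlem l h5 h6 hrec b (le_trans ha hb)).1) ih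

private lemma dstrict (l : ℕ → ℤ) (h5 : l 5 < 0) (h6 : l 6 < 3 * l 5)
    (hrec : ∀ n : ℕ, 5 ≤ n → l (n + 2) = ((n : ℤ) + 1) * (l (n + 1) - l n)) :
    ∀ a b : ℕ, 5 ≤ a → a < b → l (b + 1) - l b < l (a + 1) - l a := by
  intro a b ha hab
  have h1 : l (b + 1) - l b ≤ l (a + 1 + 1) - l (a + 1) :=
    dmono l h5 h6 hrec (a + 1) b (by omega) hab
  exact lt_of_le_of_lt h1 (dlem l h5 h6 hrec a ha).1

section main
variable (l : ℕ → ℤ) (h5 : l 5 < 0) (h6 : l 6 < 3 * l 5)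
    (hrec : ∀ n : ℕ, 5 ≤ n → l (n + 2) = ((n : ℤ) + 1) * (l (n + 1) - l n))
    (L : ℝ) (hL : 0 < L)

include h5 h6 hrec hL

private lemma phi_eq (n : ℕ) (hn : 5 ≤ n) (τ : ℝ)
    (ht1 : tau9 l L n ≤ τ) (ht2 : τ ≤ tau9 l L (n + 1)) :
    phi9 l L τ = ((l (n + 1) : ℤ) : ℝ) * L + ((n : ℝ) + 1) * τ := by
  set f : ℕ → ℝ := fun k => ((l k : ℤ) : ℝ) * L + (k : ℝ) * τ with hf
  have ht1' : ((l n : ℤ) : ℝ) * L - ((l (n + 1) : ℤ) : ℝ) * L ≤ τ := by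
    have := ht1; unfold tau9 at this; push_cast at this; linarith
  have ht2' : τ ≤ ((l (n + 1) : ℤ) : ℝ) * L - ((l (n + 2) : ℤ) : ℝ) * L := by
    have := ht2; unfold tau9 at this; push_cast at this; linarith
  have hub : ∀ k : ℕ, 5 ≤ k → f k ≤ f (n + 1) := by
    intro k hk
    rcases le_or_gt k (n + 1) with hkle | hkgt
    · refine chain_up f k (n + 1) hkle ?_
      intro j hj hj'
      have hd : (l (n + 1) - l n : ℤ) ≤ l (j + 1) - l j :=
        dmono l h5 h6 hrec j n (le_trans hk hj) (by omega)
      have hd' : ((l (n + 1) : ℤ) : ℝ) - ((l n : ℤ) : ℝ) ≤ ((l (j + 1) : ℤ) : ℝ) - ((l j : ℤ) : ℝ) := by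
        exact_mod_cast hd
      have hdL : (((l (n + 1) : ℤ) : ℝ) - ((l n : ℤ) : ℝ)) * L ≤ (((l (j + 1) : ℤ) : ℝ) - ((l j : ℤ) : ℝ)) * L :=
        mul_le_mul_of_nonneg_right hd' (le_of_lt hL)
      simp only [hf]
      push_cast
      nlinarith
    · refine chain_down f (n + 1) k (le_of_lt hkgt) ?_
      intro j hj hj'
      have hd : (l (j + 1) - l j : ℤ) ≤ l (n + 2) - l (n + 1) :=
        dmono l h5 h6 hrec (n + 1) j (by omega) hj
      have hd' : ((l (j + 1) : ℤ) : ℝ) - ((l j : ℤ) : ℝ) ≤ ((l (n + 2) : ℤ) : ℝ) - ((l (n + 1) : ℤ) : ℝ) := by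
        exact_mod_cast hd
      have hdL : (((l (j + 1) : ℤ) : ℝ) - ((l j : ℤ) : ℝ)) * L ≤ (((l (n + 2) : ℤ) : ℝ) - ((l (n + 1) : ℤ) : ℝ)) * L :=
        mul_le_mul_of_nonneg_right hd' (le_of_lt hL)
      simp only [hf]
      push_cast
      nlinarith
  have key : ∀ m : ℕ, ((l (m + 5) : ℤ) : ℝ) * L + ((m : ℝ) + 5) * τ ≤ f (n + 1) := by
    intro m
    have := hub (m + 5) (by omega)
    simp only [hf] at this ⊢
    push_cast at this ⊢
    linarith
  have hfn : f (n + 1) = ((l (n + 1) : ℤ) : ℝ) * L + ((n : ℝ) + 1) * τ := by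
    simp only [hf]; push_cast; ring
  rw [← hfn]
  apply le_antisymm
  · exact ciSup_le key
  · have hbdd : BddAbove (Set.range fun m : ℕ => ((l (m + 5) : ℤ) : ℝ) * L + ((m : ℝ) + 5) * τ) := by
      refine ⟨f (n + 1), ?_⟩
      rintro _ ⟨m, rfl⟩
      exact key m
    have := le_ciSup hbdd (n - 4)
    have e1 : n - 4 + 5 = n + 1 := by omega
    have e2 : ((n - 4 : ℕ) : ℝ) = (n : ℝ) - 4 := by
      have : (4 : ℕ) ≤ n := by omega
      push_cast [Nat.cast_sub this]
      ring
    rw [e1, e2] at this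
    calc f (n + 1) = ((l (n + 1) : ℤ) : ℝ) * L + ((n : ℝ) - 4 + 5) * τ := by
          simp only [hf]; push_cast; ring
      _ ≤ _ := this

private lemma endpoint1 (n : ℕ) (hn : 5 ≤ n) :
    ((l (n + 1) : ℤ) : ℝ) * L + ((n : ℝ) + 1) * tau9 l L n = tau9 l L (n + 1) := by
  have h := hrec n hn
  unfold tau9
  rw [show n + 1 + 1 = n + 2 by ring, h]
  push_cast
  ring

private lemma endpoint2 (n : ℕ) (hn : 5 ≤ n) :
    ((l (n + 1) : ℤ) : ℝ) * L + ((n : ℝ) + 1) * tau9 l L (n + 1) = tau9 l L (n + 2) := by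
  have h := hrec (n + 1) (by omega)
  unfold tau9
  rw [show n + 1 + 1 = n + 2 by ring, show n + 2 + 1 = n + 1 + 2 by ring, h]
  push_cast
  ring

private lemma taumono (n : ℕ) (hn : 5 ≤ n) : tau9 l L n < tau9 l L (n + 1) := by
  have h := (dlem l h5 h6 hrec n hn).1
  unfold tau9
  have h' : ((l n : ℤ) : ℝ) - ((l (n + 1) : ℤ) : ℝ) < ((l (n + 1) : ℤ) : ℝ) - ((l (n + 2) : ℤ) : ℝ) := by
    have : (l n - l (n + 1) : ℤ) < l (n + 1) - l (n + 2) := by linarith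
    exact_mod_cast this
  push_cast
  rw [show n + 1 + 1 = n + 2 by ring]
  nlinarith

end main

/-- With (ℓ_n)_{n≥5} as in the previous statement and L > 0, for every n ≥ 5
and every τ ∈ [τ_n, τ_{n+1}] (where τ_n = (ℓ_n − ℓ_{n+1})L) the supremum defining φ(τ) is
attained at the index n+1, i.e. φ(τ) = ℓ_{n+1}L + (n+1)τ; moreover φ(τ_n) = τ_{n+1} and
φ maps (τ_n, τ_{n+1}) onto (τ_{n+1}, τ_{n+2}). -/
theorem montel_stmt9 (l : ℕ → ℤ) (h5 : l 5 < 0) (h6 : l 6 < 3 * l 5)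
    (hrec : ∀ n : ℕ, 5 ≤ n → l (n + 2) = ((n : ℤ) + 1) * (l (n + 1) - l n))
    (L : ℝ) (hL : 0 < L) :
    ∀ n : ℕ, 5 ≤ n →
      (∀ τ : ℝ, tau9 l L n ≤ τ → τ ≤ tau9 l L (n + 1) →
        phi9 l L τ = ((l (n + 1) : ℤ) : ℝ) * L + ((n : ℝ) + 1) * τ) ∧
      phi9 l L (tau9 l L n) = tau9 l L (n + 1) ∧
      phi9 l L '' Set.Ioo (tau9 l L n) (tau9 l L (n + 1)) =
        Set.Ioo (tau9 l L (n + 1)) (tau9 l L (n + 2)) := by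
  intro n hn
  have hmain := fun τ h1 h2 => phi_eq l h5 h6 hrec L hL n hn τ h1 h2
  have he1 := endpoint1 l h5 h6 hrec L hL n hn
  have he2 := endpoint2 l h5 h6 hrec L hL n hn
  have htm := taumono l h5 h6 hrec L hL n hn
  refine ⟨hmain, ?_, ?_⟩
  · rw [hmain (tau9 l L n) (le_refl _) (le_of_lt htm), he1]
  · ext y
    constructor
    · rintro ⟨τ, ⟨hτ1, hτ2⟩, rfl⟩
      rw [hmain τ (le_of_lt hτ1) (le_of_lt hτ2)]
      constructor
      · rw [← he1]
        have : (0 : ℝ) < (n : ℝ) + 1 := by positivity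
        nlinarith
      · rw [← he2]
        have : (0 : ℝ) < (n : ℝ) + 1 := by positivity
        nlinarith
    · rintro ⟨hy1, hy2⟩
      set c : ℝ := ((l (n + 1) : ℤ) : ℝ) * L
      set s : ℝ := (n : ℝ) + 1
      have hs : (0 : ℝ) < s := by positivity
      refine ⟨(y - c) / s, ⟨?_, ?_⟩, ?_⟩
      · rw [lt_div_iff₀ hs]
        rw [← he1] at hy1
        nlinarith
      · rw [div_lt_iff₀ hs]
        rw [← he2] at hy2
        nlinarith
      · have hm1 : tau9 l L n ≤ (y - c) / s := by
          rw [le_div_iff₀ hs]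
          rw [← he1] at hy1
          nlinarith
        have hm2 : (y - c) / s ≤ tau9 l L (n + 1) := by
          rw [div_le_iff₀ hs]
          rw [← he2] at hy2
          nlinarith
        rw [hmain _ hm1 hm2]
        field_simp
        ring
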